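/- In the one-chord model, for every k ∈ ℕ: ε(H̃^k δ_0) = Σ_{n=0}^{k} (μⁿ/[n]!_q)·ε(H^k δ_n), and moreover ε(H^k δ_n) = 0 whenever n > k. Equivalently, the vacuum moments ⟨ω|H̃^k|ω⟩ of the EoW-brane Hamiltonian H̃ = a + a† + μW equal the transition moments ⟨ω|H^k|B_μ⟩ of the undeformed Hamiltonian H = a + a† against the q-coherent state B_μ = Σ_n (μⁿ/[n]!_q) δ_n. -/
import Mathlib


namespace OneChord

/-- The q-integer `[n]_q = (1 − qⁿ)/(1 − q)`. -/
noncomputable def qIntR (q : ℝ) (n : ℕ) : ℝ := (1 - q ^ n) / (1 - q)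

/-- The q-factorial `[n]!_q = Π_{j=1}^{n}[j]_q`. -/
noncomputable def qFactR (q : ℝ) (n : ℕ) : ℝ := ∏ j ∈ Finset.range n, qIntR q (j + 1)

/-- The one-chord space: finitely supported real functions on ℕ (chord numbers). -/
abbrev V : Type := ℕ →₀ ℝ

/-- The chord creation operator `a† δ_n = δ_{n+1}`. -/
noncomputable def aCre : V →ₗ[ℝ] V :=
  Finsupp.lift V ℝ ℕ fun n => Finsupp.single (n + 1) 1

/-- The chord annihilation operator `a δ_n = [n]_q δ_{n−1}` (so `a δ_0 = 0`). -/
noncomputable def aAnn (q : ℝ) : V →ₗ[ℝ] V :=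
  Finsupp.lift V ℝ ℕ fun n => Finsupp.single (n - 1) (qIntR q n)

/-- The weight operator `W δ_n = qⁿ δ_n`. -/
noncomputable def Wop (q : ℝ) : V →ₗ[ℝ] V :=
  Finsupp.lift V ℝ ℕ fun n => Finsupp.single n (q ^ n)

end OneChord

namespace OneChord

lemma lift_single (f : ℕ → V) (n : ℕ) :
    (Finsupp.lift V ℝ ℕ f) (Finsupp.single n (1:ℝ)) = f n := by
  simp [Finsupp.lift_apply, Finsupp.sum_single_index]

lemma qIntR_zero (q : ℝ) : qIntR q 0 = 0 := by simp [qIntR]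

lemma H_single (q : ℝ) (n : ℕ) :
    (aAnn q + aCre : Module.End ℝ V) (Finsupp.single n 1)
      = qIntR q n • Finsupp.single (n - 1) 1 + Finsupp.single (n + 1) 1 := by
  show (aAnn q) (Finsupp.single n 1) + aCre (Finsupp.single n 1) = _
  rw [aAnn, aCre, lift_single, lift_single, Finsupp.smul_single, smul_eq_mul, mul_one]

lemma Ht_single (q μ : ℝ) (n : ℕ) :
    (aAnn q + aCre + μ • Wop q : Module.End ℝ V) (Finsupp.single n 1)
      = qIntR q n • Finsupp.single (n - 1) 1 + Finsupp.single (n + 1) 1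
        + (μ * q ^ n) • Finsupp.single n 1 := by
  show (aAnn q + aCre : Module.End ℝ V) (Finsupp.single n 1)
      + (μ • Wop q) (Finsupp.single n 1) = _
  rw [H_single]
  congr 1
  show μ • (Wop q) (Finsupp.single n 1) = _
  rw [Wop, lift_single, Finsupp.smul_single, Finsupp.smul_single, smul_eq_mul, smul_eq_mul,
    mul_one]

/-- `ee q k n = (H^k δ_n)(0)`. -/
noncomputable def ee (q : ℝ) (k n : ℕ) : ℝ :=
  ((((aAnn q + aCre : Module.End ℝ V)) ^ k) (Finsupp.single n 1)) 0

/-- `tt q μ k n = (H̃^k δ_n)(0)`. -/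
noncomputable def tt (q μ : ℝ) (k n : ℕ) : ℝ :=
  ((((aAnn q + aCre + μ • Wop q : Module.End ℝ V)) ^ k) (Finsupp.single n 1)) 0

lemma ee_zero (q : ℝ) (n : ℕ) : ee q 0 n = if n = 0 then 1 else 0 := by
  simp [ee, Finsupp.single_apply]

lemma tt_zero (q μ : ℝ) (n : ℕ) : tt q μ 0 n = if n = 0 then 1 else 0 := by
  simp [tt, Finsupp.single_apply]

lemma ee_succ (q : ℝ) (k n : ℕ) :
    ee q (k + 1) n = qIntR q n * ee q k (n - 1) + ee q k (n + 1) := by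
  unfold ee
  rw [pow_succ, Module.End.mul_apply, H_single, map_add, map_smul, Finsupp.add_apply,
    Finsupp.smul_apply, smul_eq_mul]

lemma tt_succ (q μ : ℝ) (k n : ℕ) :
    tt q μ (k + 1) n = qIntR q n * tt q μ k (n - 1) + tt q μ k (n + 1)
      + (μ * q ^ n) * tt q μ k n := by
  unfold tt
  rw [pow_succ, Module.End.mul_apply, Ht_single, map_add, map_add, map_smul, map_smul,
    Finsupp.add_apply, Finsupp.add_apply, Finsupp.smul_apply, Finsupp.smul_apply,
    smul_eq_mul, smul_eq_mul]

lemma ee_vanish (q : ℝ) : ∀ k n : ℕ, k < n → ee q k n = 0 := by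
  intro k
  induction k with
  | zero => intro n hn; rw [ee_zero, if_neg (by omega)]
  | succ k ih =>
    intro n hn
    rw [ee_succ]
    rcases n with _ | m
    · omega
    · simp only [Nat.add_sub_cancel]
      rw [ih m (by omega), ih (m + 2) (by omega)]
      ring

lemma qIntR_add (q : ℝ) (hq : q ≠ 1) (n j : ℕ) :
    qIntR q (n + j) = qIntR q n + q ^ n * qIntR q j := by
  have h1 : (1 : ℝ) - q ≠ 0 := by intro h; apply hq; linarith
  unfold qIntR
  field_simp
  ring_nf

lemma qIntR_pos (q : ℝ) (hq0 : 0 < q) (hq1 : q < 1) (j : ℕ) : 0 < qIntR q (j + 1) := by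
  have : q ^ (j + 1) < 1 := pow_lt_one₀ (le_of_lt hq0) hq1 (by omega)
  have : (0:ℝ) < 1 - q ^ (j + 1) := by linarith
  exact div_pos this (by linarith)

lemma qFactR_pos (q : ℝ) (hq0 : 0 < q) (hq1 : q < 1) (n : ℕ) : 0 < qFactR q n := by
  unfold qFactR
  exact Finset.prod_pos fun j _ => qIntR_pos q hq0 hq1 j

lemma coeff_identity (q μ : ℝ) (hq0 : 0 < q) (hq1 : q < 1) (j : ℕ) :
    qIntR q (j + 1) * (μ ^ (j + 1) / qFactR q (j + 1)) = μ * (μ ^ j / qFactR q j) := by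
  have h1 : qFactR q (j + 1) = qFactR q j * qIntR q (j + 1) := Finset.prod_range_succ _ _
  have h2 : qFactR q j ≠ 0 := ne_of_gt (qFactR_pos q hq0 hq1 j)
  have h3 : qIntR q (j + 1) ≠ 0 := ne_of_gt (qIntR_pos q hq0 hq1 j)
  rw [h1]
  field_simp
  ring

lemma main (q μ : ℝ) (hq0 : 0 < q) (hq1 : q < 1) : ∀ k n : ℕ,
    tt q μ k n = ∑ j ∈ Finset.range (k + 1), (μ ^ j / qFactR q j) * ee q k (n + j) := by
  intro k
  induction k with
  | zero =>
    intro n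
    simp [tt_zero, ee_zero, qFactR]
  | succ k ih =>
    intro n
    have hqe : q ≠ 1 := ne_of_lt hq1
    rcases n with _ | m
    · -- n = 0
      rw [tt_succ, qIntR_zero, zero_mul, zero_add, ih, ih, pow_zero, mul_one]
      have hR : ∑ j ∈ Finset.range (k + 2), (μ ^ j / qFactR q j) * ee q (k + 1) (0 + j)
          = (∑ j ∈ Finset.range (k + 2), (μ ^ j / qFactR q j) * (qIntR q j * ee q k (j - 1)))
            + ∑ j ∈ Finset.range (k + 2), (μ ^ j / qFactR q j) * ee q k (j + 1) := by
        rw [← Finset.sum_add_distrib]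
        refine Finset.sum_congr rfl fun j _ => ?_
        rw [Nat.zero_add, ee_succ]
        ring
      rw [hR]
      have hS1 : ∑ j ∈ Finset.range (k + 2), (μ ^ j / qFactR q j) * (qIntR q j * ee q k (j - 1))
          = μ * ∑ j ∈ Finset.range (k + 1), (μ ^ j / qFactR q j) * ee q k (0 + j) := by
        rw [Finset.sum_range_succ', qIntR_zero, Finset.mul_sum]
        simp only [zero_mul, mul_zero, add_zero]
        refine Finset.sum_congr rfl fun j _ => ?_
        rw [Nat.add_sub_cancel, Nat.zero_add]
        rw [show (μ ^ (j+1) / qFactR q (j+1)) * (qIntR q (j+1) * ee q k j)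
            = (qIntR q (j + 1) * (μ ^ (j + 1) / qFactR q (j + 1))) * ee q k j from by ring,
          coeff_identity q μ hq0 hq1]
        ring
      have hS2 : ∑ j ∈ Finset.range (k + 2), (μ ^ j / qFactR q j) * ee q k (j + 1)
          = ∑ j ∈ Finset.range (k + 1), (μ ^ j / qFactR q j) * ee q k (0 + 1 + j) := by
        rw [Finset.sum_range_succ, ee_vanish q k (k + 2) (by omega), mul_zero, add_zero]
        refine Finset.sum_congr rfl fun j _ => ?_
        rw [show 0 + 1 + j = j + 1 from by omega]
      rw [hS1, hS2]
      ring
    · -- n = m + 1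
      rw [tt_succ, ih, ih, ih]
      simp only [Nat.add_sub_cancel]
      have hR : ∑ j ∈ Finset.range (k + 2), (μ ^ j / qFactR q j) * ee q (k + 1) (m + 1 + j)
          = qIntR q (m + 1)
              * (∑ j ∈ Finset.range (k + 2), (μ ^ j / qFactR q j) * ee q k (m + j))
            + q ^ (m + 1)
              * (∑ j ∈ Finset.range (k + 2),
                  qIntR q j * ((μ ^ j / qFactR q j) * ee q k (m + j)))
            + ∑ j ∈ Finset.range (k + 2), (μ ^ j / qFactR q j) * ee q k (m + 2 + j) := by
        rw [Finset.mul_sum, Finset.mul_sum, ← Finset.sum_add_distrib, ← Finset.sum_add_distrib]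
        refine Finset.sum_congr rfl fun j _ => ?_
        rw [show m + 1 + j = (m + j) + 1 from by omega, ee_succ,
          show m + j + 1 - 1 = m + j from by omega,
          show m + j + 1 + 1 = m + 2 + j from by omega,
          show (m + j : ℕ) + 1 = (m + 1) + j from by omega,
          qIntR_add q hqe (m + 1) j]
        ring
      rw [hR]
      have hA : ∑ j ∈ Finset.range (k + 2), (μ ^ j / qFactR q j) * ee q k (m + j)
          = ∑ j ∈ Finset.range (k + 1), (μ ^ j / qFactR q j) * ee q k (m + j) := by
        rw [Finset.sum_range_succ, ee_vanish q k (m + (k + 1)) (by omega), mul_zero, add_zero]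
      have hB : ∑ j ∈ Finset.range (k + 2), qIntR q j * ((μ ^ j / qFactR q j) * ee q k (m + j))
          = μ * ∑ j ∈ Finset.range (k + 1), (μ ^ j / qFactR q j) * ee q k (m + 1 + j) := by
        rw [Finset.sum_range_succ', qIntR_zero, zero_mul, add_zero, Finset.mul_sum]
        refine Finset.sum_congr rfl fun j _ => ?_
        rw [show m + (j + 1) = m + 1 + j from by omega,
          show qIntR q (j+1) * ((μ ^ (j+1) / qFactR q (j+1)) * ee q k (m + 1 + j))
            = (qIntR q (j + 1) * (μ ^ (j + 1) / qFactR q (j + 1))) * ee q k (m + 1 + j)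
            from by ring,
          coeff_identity q μ hq0 hq1]
        ring
      have hC : ∑ j ∈ Finset.range (k + 2), (μ ^ j / qFactR q j) * ee q k (m + 2 + j)
          = ∑ j ∈ Finset.range (k + 1), (μ ^ j / qFactR q j) * ee q k (m + 2 + j) := by
        rw [Finset.sum_range_succ, ee_vanish q k (m + 2 + (k + 1)) (by omega), mul_zero, add_zero]
      rw [hA, hB, hC]
      ring

end OneChord


open OneChord in
/-- the vacuum moments of the EoW-brane Hamiltonian `H̃ = a + a† + μW`
equal the transition moments of `H = a + a†` against the q-coherent state
`B_μ = Σ_n (μⁿ/[n]!_q) δ_n`: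
`ε(H̃^k δ_0) = Σ_{n=0}^{k} (μⁿ/[n]!_q)·ε(H^k δ_n)`, and `ε(H^k δ_n) = 0` for `n > k`. -/
theorem stmt_3 (q μ : ℝ) (hq0 : 0 < q) (hq1 : q < 1) :
    (∀ k : ℕ,
      ((((aAnn q + aCre + μ • Wop q : Module.End ℝ V)) ^ k) (Finsupp.single 0 1)) 0
        = ∑ n ∈ Finset.range (k + 1),
            (μ ^ n / qFactR q n)
              * ((((aAnn q + aCre : Module.End ℝ V)) ^ k) (Finsupp.single n 1)) 0) ∧
    (∀ k n : ℕ, k < n →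
      ((((aAnn q + aCre : Module.End ℝ V)) ^ k) (Finsupp.single n 1)) 0 = 0) := by
  constructor
  · intro k
    have := main q μ hq0 hq1 k 0
    simp only [Nat.zero_add] at this
    exact this
  · intro k n hkn
    exact ee_vanish q k n hkn
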